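/- λ_ij·λ_jk − λ_ij·λ_ik − λ_ik·λ_jk = −1 holds if and only if φ_ik = (φ_ij + φ_jk)/(1 + φ_ij·φ_jk/c²), i.e. the parameters φ obey the Einstein velocity-addition law with limiting velocity c. -/

import Mathlib

/-- With `c = i(q²+1)/(q²−1)` and `φ_ab = c/λ_ab`, the Jacobi condition
`λij·λjk − λij·λik − λik·λjk = −1` is equivalent to the Einstein
velocity-addition law `φik = (φij + φjk)/(1 + φij·φjk/c²)`. -/
theorem jacobi_iff_einstein_addition (q : ℂ) (hq1 : q ^ 2 ≠ 1) (hq2 : q ^ 2 ≠ -1)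
    (lamij lamik lamjk : ℂ) (hij : lamij ≠ 0) (hik : lamik ≠ 0) (hjk : lamjk ≠ 0)
    (hprod : lamij * lamjk ≠ -1)
    (c : ℂ) (hc : c = Complex.I * (q ^ 2 + 1) / (q ^ 2 - 1))
    (phiij phiik phijk : ℂ)
    (hphiij : phiij = c / lamij) (hphiik : phiik = c / lamik)
    (hphijk : phijk = c / lamjk) :
    lamij * lamjk - lamij * lamik - lamik * lamjk = -1 ↔
      phiik = (phiij + phijk) / (1 + phiij * phijk / c ^ 2) := by
  have hq1' : q ^ 2 - 1 ≠ 0 := sub_ne_zero.mpr hq1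
  have hq2' : q ^ 2 + 1 ≠ 0 := by intro h; apply hq2; linear_combination h
  have hc0 : c ≠ 0 := by
    rw [hc]; exact div_ne_zero (mul_ne_zero Complex.I_ne_zero hq2') hq1'
  have hprod' : lamij * lamjk + 1 ≠ 0 := fun hh => hprod (by linear_combination hh)
  have hden : 1 + phiij * phijk / c ^ 2 ≠ 0 := by
    have : 1 + phiij * phijk / c ^ 2 = (lamij * lamjk + 1) / (lamij * lamjk) := by
      rw [hphiij, hphijk]; field_simp
    rw [this]
    exact div_ne_zero hprod' (mul_ne_zero hij hjk)
  subst hphiij hphiik hphijk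
  rw [eq_div_iff hden]
  constructor
  · intro h
    field_simp
    ring_nf
    linear_combination h
  · intro h
    field_simp at h
    ring_nf at h
    have hcc : c ^ 3 * lamij * lamjk ≠ 0 :=
      mul_ne_zero (mul_ne_zero (pow_ne_zero 3 hc0) hij) hjk
    refine mul_left_cancel₀ hcc ?_
    linear_combination c ^ 3 * lamij * lamjk * h
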